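/- Let Λ = E_8 ⊕ E_8 ⊕ E_8 ⊕ U ⊕ U be the even unimodular lattice of signature (2,26). The lattice T = E_8 ⊕ E_8 ⊕ U ⊕ U(3) admits a primitive embedding into Λ whose orthogonal complement is isometric to E_6 ⊕ A_2. -/
import Mathlib

open Matrix

/-- Gram matrix of the (negative definite) root lattice `A₂`. -/
def gA2 : Matrix (Fin 2) (Fin 2) ℤ := !![-2, 1; 1, -2]

/-- Gram matrix of the hyperbolic plane `U`. -/
def gU : Matrix (Fin 2) (Fin 2) ℤ := !![0, 1; 1, 0]

/-- Gram matrix of `U(3)`, the hyperbolic plane scaled by 3. -/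
def gU3 : Matrix (Fin 2) (Fin 2) ℤ := !![0, 3; 3, 0]

/-- Edges of the `E₈` Dynkin diagram (chain 0–1–2–3–4–5–6 with node 7 attached to 2). -/
def e8adj : List (ℕ × ℕ) := [(0,1),(1,2),(2,3),(3,4),(4,5),(5,6),(2,7)]

/-- Gram matrix of the (negative definite) root lattice `E₈`. -/
def gE8 : Matrix (Fin 8) (Fin 8) ℤ :=
  Matrix.of fun i j =>
    if i = j then -2 else if (min i.val j.val, max i.val j.val) ∈ e8adj then 1 else 0

/-- Edges of the `E₆` Dynkin diagram (chain 0–1–2–3–4 with node 5 attached to 2). -/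
def e6adj : List (ℕ × ℕ) := [(0,1),(1,2),(2,3),(3,4),(2,5)]

/-- Gram matrix of the (negative definite) root lattice `E₆`. -/
def gE6 : Matrix (Fin 6) (Fin 6) ℤ :=
  Matrix.of fun i j =>
    if i = j then -2 else if (min i.val j.val, max i.val j.val) ∈ e6adj then 1 else 0

/-- Index type for `Λ = E₈ ⊕ E₈ ⊕ E₈ ⊕ U ⊕ U` (rank 26). -/
abbrev ΛIdx := (Fin 8 ⊕ Fin 8) ⊕ (Fin 8 ⊕ (Fin 2 ⊕ Fin 2))

/-- Gram matrix of the even unimodular lattice `Λ = E₈³ ⊕ U²` of signature `(2,26)`. -/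
def gLambda : Matrix ΛIdx ΛIdx ℤ :=
  fromBlocks (fromBlocks gE8 0 0 gE8) 0 0 (fromBlocks gE8 0 0 (fromBlocks gU 0 0 gU))

/-- Index type for `T = E₈ ⊕ E₈ ⊕ U ⊕ U(3)` (rank 18). -/
abbrev TIdx := (Fin 8 ⊕ Fin 8) ⊕ (Fin 2 ⊕ Fin 2)

/-- Gram matrix of `T = E₈ ⊕ E₈ ⊕ U ⊕ U(3)`. -/
def gT : Matrix TIdx TIdx ℤ :=
  fromBlocks (fromBlocks gE8 0 0 gE8) 0 0 (fromBlocks gU 0 0 gU3)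

/-- Index type for `R = E₆ ⊕ A₂` (rank 8). -/
abbrev RIdx := Fin 6 ⊕ Fin 2

/-- Gram matrix of `R = E₆ ⊕ A₂`. -/
def gR : Matrix RIdx RIdx ℤ := fromBlocks gE6 0 0 gA2

/-! ### Auxiliary explicit matrices

`Bmat` embeds `T = E₈ ⊕ E₈ ⊕ U ⊕ U(3)` into `Λ`: the two `E₈`'s and `U` go in
identically, while `U(3)` is spanned by `x = e₂` and `y = (a - b) + e₂ + 3 f₂`,
where `a = α₆` and `b` span the `A₂` orthogonal to the standard `E₆ ⊂ E₈` (third copy),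
and `e₂, f₂` is the standard basis of the last hyperbolic plane. -/

def ambvec : Fin 8 → ℤ := ![-2, -4, -6, -5, -4, -3, 0, -3]

def Bmat : Matrix TIdx ΛIdx ℤ := Matrix.of fun i j =>
  match i, j with
  | .inl p, .inl q => if p = q then 1 else 0
  | .inr (.inl p), .inr (.inr (.inl q)) => if p = q then 1 else 0
  | .inr (.inr p), .inr (.inl q) =>
      !![0,0,0,0,0,0,0,0; -2,-4,-6,-5,-4,-3,0,-3] p q
  | .inr (.inr p), .inr (.inr (.inr q)) => !![1,0; 1,3] p q
  | _, _ => 0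

/-- Rows spanning the orthogonal complement: the standard `E₆ ⊂ E₈` (third copy,
nodes 0,1,2,3,4,7) together with `a + e₂` and `b - e₂`. -/
def Cmat : Matrix RIdx ΛIdx ℤ := Matrix.of fun i j =>
  match i, j with
  | .inl p, .inr (.inl q) => if q = ![0,1,2,3,4,7] p then 1 else 0
  | .inr p, .inr (.inl q) => !![0,0,0,0,0,0,1,0; 2,4,6,5,4,3,1,3] p q
  | .inr p, .inr (.inr (.inr q)) => !![1,0; -1,0] p q
  | _, _ => 0

/-- An integer left inverse of `Bmatᵀ`; its existence certifies primitivity. -/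
def Amat : Matrix TIdx ΛIdx ℤ := Matrix.of fun i j =>
  match i, j with
  | .inl p, .inl q => if p = q then 1 else 0
  | .inr (.inl p), .inr (.inr (.inl q)) => if p = q then 1 else 0
  | .inr (.inr p), .inr (.inl q) =>
      !![-1,0,0,0,0,0,0,1; 1,0,0,0,0,0,0,-1] p q
  | .inr (.inr p), .inr (.inr (.inr q)) => !![1,0; 0,0] p q
  | _, _ => 0

/-- Coefficient-extraction matrix for the complement. -/
def Emat : Matrix RIdx ΛIdx ℤ := Matrix.of fun i j =>
  match i, j with
  | .inl p, .inr (.inl q) =>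
      !![1,0,0,0,0,-2,2,0; 0,1,0,0,0,-4,4,0; 0,0,1,0,0,-6,6,0;
         0,0,0,1,0,-5,5,0; 0,0,0,0,1,-4,4,0; 0,0,0,0,0,-3,3,1] p q
  | .inl p, .inr (.inr (.inr q)) =>
      !![-2,0; -4,0; -6,0; -5,0; -4,0; -3,0] p q
  | .inr p, .inr (.inl q) => !![0,0,0,0,0,1,-1,0; 0,0,0,0,0,1,-1,0] p q
  | .inr p, .inr (.inr (.inr q)) => !![2,0; 1,0] p q
  | _, _ => 0

/-- The inverse of the `E₈` Gram matrix (an integer matrix, as `E₈` is unimodular). -/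
def e8inv : Matrix (Fin 8) (Fin 8) ℤ :=
  !![-4,-7,-10,-8,-6,-4,-2,-5; -7,-14,-20,-16,-12,-8,-4,-10;
     -10,-20,-30,-24,-18,-12,-6,-15; -8,-16,-24,-20,-15,-10,-5,-12;
     -6,-12,-18,-15,-12,-8,-4,-9; -4,-8,-12,-10,-8,-6,-3,-6;
     -2,-4,-6,-5,-4,-3,-2,-3; -5,-10,-15,-12,-9,-6,-3,-8]

/-- The matrix `F` in the certificate identity `Cᵀ·E + F·(B·gΛ) = 1`. -/
def Fmat : Matrix ΛIdx TIdx ℤ := Matrix.of fun i j =>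
  match i, j with
  | .inl (.inl p), .inl (.inl q) => e8inv p q
  | .inl (.inr p), .inl (.inr q) => e8inv p q
  | .inr (.inl p), .inr (.inr q) =>
      !![0,0; 0,0; 0,0; 0,0; 0,0; 1,-1; 1,-1; 0,0] p q
  | .inr (.inr (.inl p)), .inr (.inl q) => !![0,1; 1,0] p q
  | .inr (.inr (.inr p)), .inr (.inr q) => !![0,0; 1,0] p q
  | _, _ => 0

lemma sum_smul_rows {m n : Type*} [Fintype m] [Fintype n] [DecidableEq m]
    (M : Matrix m n ℤ) (c : m → ℤ) :
    (∑ i, c i • M i) = Mᵀ *ᵥ c := by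
  funext j
  simp [Matrix.mulVec, dotProduct, Matrix.transpose_apply, Finset.sum_apply,
    mul_comm]

lemma AB_eq_one : Amat * Bmatᵀ = 1 := by decide
lemma B_gram : Bmat * gLambda * Bmatᵀ = gT := by decide
lemma C_gram : Cmat * gLambda * Cmatᵀ = gR := by decide
lemma CgB_eq_zero : Cmat * gLambda * Bmatᵀ = 0 := by decide
lemma cert : Cmatᵀ * Emat + Fmat * (Bmat * gLambda) = 1 := by decide
lemma gLambda_symm : gLambdaᵀ = gLambda := by decide

theorem T_embeds_primitively_in_Lambda_with_complement_E6_A2 :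
    ∃ B : Matrix TIdx ΛIdx ℤ,
      B * gLambda * Bᵀ = gT ∧
      (∀ (v : ΛIdx → ℤ) (k : ℤ), k ≠ 0 →
        k • v ∈ Submodule.span ℤ (Set.range fun i => B i) →
        v ∈ Submodule.span ℤ (Set.range fun i => B i)) ∧
      ∃ Cm : Matrix RIdx ΛIdx ℤ,
        Cm * gLambda * Cmᵀ = gR ∧
        (∀ w : ΛIdx → ℤ,
          w ∈ Submodule.span ℤ (Set.range fun i => Cm i) ↔
          ∀ u ∈ Submodule.span ℤ (Set.range fun i => B i), w ⬝ᵥ gLambda.mulVec u = 0) := by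
  refine ⟨Bmat, B_gram, ?_, Cmat, C_gram, ?_⟩
  · -- primitivity
    intro v k hk hmem
    rw [Submodule.mem_span_range_iff_exists_fun] at hmem ⊢
    obtain ⟨c, hc⟩ := hmem
    rw [sum_smul_rows] at hc
    have h2 : Amat *ᵥ (Bmatᵀ *ᵥ c) = Amat *ᵥ (k • v) := by rw [hc]
    rw [Matrix.mulVec_mulVec, AB_eq_one, Matrix.one_mulVec, Matrix.mulVec_smul] at h2
    have h3 : k • (Bmatᵀ *ᵥ (Amat *ᵥ v)) = k • v := by
      rw [← Matrix.mulVec_smul, ← h2, hc]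
    exact ⟨Amat *ᵥ v, by
      rw [sum_smul_rows]; exact smul_right_injective (ΛIdx → ℤ) hk h3⟩
  · -- complement characterization
    intro w
    constructor
    · intro hw u hu
      rw [Submodule.mem_span_range_iff_exists_fun] at hw hu
      obtain ⟨d, hd⟩ := hw
      obtain ⟨c, hc⟩ := hu
      rw [sum_smul_rows] at hd hc
      subst hd hc
      rw [Matrix.mulVec_mulVec, Matrix.mulVec_transpose,
        Matrix.dotProduct_mulVec, Matrix.vecMul_vecMul, ← Matrix.mul_assoc,
        CgB_eq_zero, Matrix.vecMul_zero, zero_dotProduct]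
    · intro h
      have hrows : ∀ i : TIdx, w ⬝ᵥ gLambda *ᵥ (Bmat i) = 0 := fun i =>
        h (Bmat i) (Submodule.subset_span ⟨i, rfl⟩)
      have hker : (Bmat * gLambda) *ᵥ w = 0 := by
        funext i
        have h1 : ((Bmat * gLambda) *ᵥ w) i = Bmat i ⬝ᵥ (gLambda *ᵥ w) := by
          rw [← Matrix.mulVec_mulVec]; rfl
        have h2 : w ⬝ᵥ gLambda *ᵥ (Bmat i) = Bmat i ⬝ᵥ (gLambda *ᵥ w) := by
          rw [Matrix.dotProduct_mulVec, dotProduct_comm,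
            ← Matrix.mulVec_transpose, gLambda_symm]
        simp only [Pi.zero_apply]
        rw [h1, ← h2]
        exact hrows i
      have hw : w = Cmatᵀ *ᵥ (Emat *ᵥ w) := by
        have h1 : (Cmatᵀ * Emat + Fmat * (Bmat * gLambda)) *ᵥ w = w := by
          rw [cert, Matrix.one_mulVec]
        rw [Matrix.add_mulVec, ← Matrix.mulVec_mulVec, ← Matrix.mulVec_mulVec,
          hker, Matrix.mulVec_zero, add_zero] at h1
        exact h1.symm
      rw [Submodule.mem_span_range_iff_exists_fun]
      exact ⟨Emat *ᵥ w, by rw [sum_smul_rows, ← hw]⟩
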